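/- Let f_ν be the univariate Student's t density with ν > 0 degrees of freedom and scale parameter V > 0. Then for every β ≥ 0, (1/(1+β)) ∫_ℝ f_ν(z)^{1+β} dz ≤ 1 / ((1+β) V^{β/2} π^{β/2}); in particular this bound is independent of the degrees of freedom ν. -/

import Mathlib

open Real MeasureTheory Set

lemma realBeta {a b : ℝ} (ha : 0 < a) (hb : 0 < b) :
    ∫ x in (0:ℝ)..1, x ^ (a - 1) * (1 - x) ^ (b - 1) =
      Real.Gamma a * Real.Gamma b / Real.Gamma (a + b) := by
  have hcast : Complex.betaIntegral a b =
      ((∫ x in (0:ℝ)..1, x ^ (a - 1) * (1 - x) ^ (b - 1) : ℝ) : ℂ) := by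
    rw [Complex.betaIntegral, ← intervalIntegral.integral_ofReal]
    apply intervalIntegral.integral_congr
    intro x hx
    rw [Set.uIcc_of_le (by norm_num : (0:ℝ) ≤ 1)] at hx
    have hx0 : 0 ≤ x := hx.1
    have hx1 : 0 ≤ 1 - x := by linarith [hx.2]
    dsimp only
    rw [show ((a:ℂ) - 1) = ((a - 1 : ℝ) : ℂ) by push_cast; ring,
      show ((b:ℂ) - 1) = ((b - 1 : ℝ) : ℂ) by push_cast; ring,
      show (1 - (x:ℂ)) = ((1 - x : ℝ) : ℂ) by push_cast; ring,
      ← Complex.ofReal_cpow hx0, ← Complex.ofReal_cpow hx1, ← Complex.ofReal_mul]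
  have h := Complex.Gamma_mul_Gamma_eq_betaIntegral
      (s := (a:ℂ)) (t := (b:ℂ)) (by simpa using ha) (by simpa using hb)
  rw [hcast] at h
  have h2 : ((Real.Gamma a * Real.Gamma b : ℝ) : ℂ) =
      ((Real.Gamma (a + b) * ∫ x in (0:ℝ)..1, x ^ (a - 1) * (1 - x) ^ (b - 1) : ℝ) : ℂ) := by
    rw [Complex.ofReal_mul, Complex.ofReal_mul, ← Complex.Gamma_ofReal, ← Complex.Gamma_ofReal,
      ← Complex.Gamma_ofReal, Complex.ofReal_add]
    exact h
  have h3 := Complex.ofReal_injective h2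
  have hG : Real.Gamma (a + b) ≠ 0 := (Real.Gamma_pos_of_pos (by linarith)).ne'
  field_simp
  linarith [h3]

lemma integral_one_add_sq_rpow {s : ℝ} (hs : 1/2 < s) :
    ∫ u : ℝ, (1 + u ^ 2) ^ (-s) =
      Real.sqrt π * Real.Gamma (s - 1/2) / Real.Gamma s := by
  set φ : ℝ → ℝ := fun u => u ^ 2 / (1 + u ^ 2) with hφ
  set φ' : ℝ → ℝ := fun u => 2 * u / (1 + u ^ 2) ^ 2 with hφ'
  set g : ℝ → ℝ := fun x => x ^ ((1/2:ℝ) - 1) * (1 - x) ^ ((s - 1/2) - 1) with hg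
  have himg : φ '' Ioi 0 = Ioo 0 1 := by
    ext y
    constructor
    · rintro ⟨u, hu, rfl⟩
      have hu0 : (0:ℝ) < u := hu
      have ht : (0:ℝ) < 1 + u ^ 2 := by positivity
      constructor
      · positivity
      · rw [div_lt_one ht]; nlinarith
    · rintro ⟨hy0, hy1⟩
      have h1y : (0:ℝ) < 1 - y := by linarith
      refine ⟨Real.sqrt (y / (1 - y)), ?_, ?_⟩
      · exact Real.sqrt_pos.mpr (by positivity)
      · have hsq : Real.sqrt (y / (1 - y)) ^ 2 = y / (1 - y) :=
          Real.sq_sqrt (by positivity)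
        simp only [hφ, hsq]
        field_simp
        ring
  have hderiv : ∀ x ∈ Ioi (0:ℝ), HasDerivWithinAt φ (φ' x) (Ioi 0) x := by
    intro x hx
    have ht : (0:ℝ) < 1 + x ^ 2 := by positivity
    have h1 : HasDerivAt (fun u : ℝ => u ^ 2) (2 * x) x := by
      simpa using (hasDerivAt_pow 2 x)
    have h2 : HasDerivAt (fun u : ℝ => 1 + u ^ 2) (2 * x) x := by
      simpa using h1.const_add (1:ℝ)
    have := h1.div h2 ht.ne'
    apply HasDerivAt.hasDerivWithinAt
    refine this.congr_deriv ?_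
    simp only [hφ']
    field_simp
    ring
  have hinj : InjOn φ (Ioi 0) := by
    intro u hu v hv h
    have hu0 : (0:ℝ) < u := hu
    have hv0 : (0:ℝ) < v := hv
    have htu : (0:ℝ) < 1 + u ^ 2 := by positivity
    have htv : (0:ℝ) < 1 + v ^ 2 := by positivity
    simp only [hφ] at h
    rw [div_eq_div_iff htu.ne' htv.ne'] at h
    have h2 : u ^ 2 = v ^ 2 := by nlinarith
    have h3 : (u - v) * (u + v) = 0 := by nlinarith
    rcases mul_eq_zero.mp h3 with h4 | h4
    · linarith
    · linarith
  have hcov := integral_image_eq_integral_abs_deriv_smul measurableSet_Ioi hderiv hinj g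
  rw [himg] at hcov
  have hkey : ∀ u ∈ Ioi (0:ℝ), |φ' u| • g (φ u) = 2 * (1 + u ^ 2) ^ (-s) := by
    intro u hu
    have hu0 : (0:ℝ) < u := hu
    have ht : (0:ℝ) < 1 + u ^ 2 := by positivity
    have habs : |φ' u| = 2 * u / (1 + u ^ 2) ^ 2 := abs_of_pos (by positivity)
    have h1φ : 1 - φ u = (1 + u ^ 2)⁻¹ := by
      simp only [hφ]; field_simp; ring
    have e1 : (φ u) ^ ((1/2:ℝ) - 1) = u⁻¹ * (1 + u ^ 2) ^ ((1/2:ℝ)) := by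
      simp only [hφ]
      rw [show ((1/2:ℝ) - 1) = -(1/2) by norm_num, Real.rpow_neg (by positivity),
        Real.div_rpow (by positivity) ht.le,
        show ((u^2:ℝ)) ^ ((1/2):ℝ) = u by
          rw [← Real.rpow_natCast u 2, ← Real.rpow_mul hu0.le]; norm_num,
        inv_div, div_eq_mul_inv, mul_comm]
    have e2 : (1 - φ u) ^ ((s - 1/2) - 1) = (1 + u ^ 2) ^ ((3/2:ℝ) - s) := by
      rw [h1φ, Real.inv_rpow ht.le, ← Real.rpow_neg ht.le]
      ring_nf
    have e3 : ((1 + u^2):ℝ) ^ ((1/2):ℝ) * (1 + u^2) ^ ((3/2:ℝ) - s) =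
        (1 + u^2) ^ ((2:ℝ) - s) := by
      rw [← Real.rpow_add ht]; ring_nf
    have e4 : ((1 + u^2):ℝ) ^ ((2:ℝ) - s) = (1 + u^2) ^ 2 * (1 + u^2) ^ (-s) := by
      rw [show ((2:ℝ) - s) = 2 + (-s) by ring, Real.rpow_add ht, Real.rpow_two]
    simp only [hg, smul_eq_mul, habs, e1, e2]
    rw [mul_assoc u⁻¹, e3, e4]
    field_simp
  rw [setIntegral_congr_fun measurableSet_Ioi hkey] at hcov
  have h2int : ∫ u : ℝ, (1 + u ^ 2) ^ (-s) = 2 * ∫ u in Ioi (0:ℝ), (1 + u ^ 2) ^ (-s) := by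
    have := integral_comp_abs (f := fun t : ℝ => (1 + t ^ 2) ^ (-s))
    simpa [sq_abs] using this
  have hbeta := realBeta (a := 1/2) (b := s - 1/2) (by norm_num) (by linarith)
  rw [intervalIntegral.integral_of_le (by norm_num : (0:ℝ) ≤ 1),
    MeasureTheory.integral_Ioc_eq_integral_Ioo] at hbeta
  rw [hcov, integral_const_mul] at hbeta
  rw [show (1/2 + (s - 1/2)) = s by ring, Real.Gamma_one_half_eq] at hbeta
  rw [h2int, ← hbeta]

lemma gamma_ratio_le {ν : ℝ} (hν : 0 < ν) :
    Real.Gamma ((ν + 1) / 2) ≤ Real.sqrt ν * Real.Gamma (ν / 2) := by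
  have h0 : 0 < Real.Gamma ((ν + 1) / 2) := Real.Gamma_pos_of_pos (by linarith)
  have h1 : 0 < Real.Gamma (ν / 2) := Real.Gamma_pos_of_pos (by linarith)
  have h2 : 0 < Real.Gamma (ν / 2 + 1) := Real.Gamma_pos_of_pos (by linarith)
  have key : Real.Gamma ((ν + 1) / 2) ^ 2 ≤ Real.Gamma (ν / 2) * Real.Gamma (ν / 2 + 1) := by
    rw [← Real.log_le_log_iff (by positivity) (by positivity), Real.log_pow,
      Real.log_mul h1.ne' h2.ne']
    have hc := Real.convexOn_log_Gamma.2 (Set.mem_Ioi.mpr (by linarith : (0:ℝ) < ν / 2))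
      (Set.mem_Ioi.mpr (by linarith : (0:ℝ) < ν / 2 + 1))
      (by norm_num : (0:ℝ) ≤ 1/2) (by norm_num : (0:ℝ) ≤ 1/2) (by norm_num)
    simp only [Function.comp, smul_eq_mul] at hc
    rw [show (1/2:ℝ) * (ν / 2) + (1/2) * (ν / 2 + 1) = (ν + 1) / 2 by ring] at hc
    push_cast
    linarith
  have key2 : Real.Gamma ((ν + 1) / 2) ^ 2 ≤ ν * Real.Gamma (ν / 2) ^ 2 := by
    rw [Real.Gamma_add_one (by positivity : (ν/2 : ℝ) ≠ 0)] at key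
    nlinarith
  calc Real.Gamma ((ν + 1) / 2) = Real.sqrt (Real.Gamma ((ν + 1) / 2) ^ 2) := by
        rw [Real.sqrt_sq h0.le]
    _ ≤ Real.sqrt (ν * Real.Gamma (ν / 2) ^ 2) := Real.sqrt_le_sqrt key2
    _ = Real.sqrt ν * Real.Gamma (ν / 2) := by
        rw [Real.sqrt_mul hν.le, Real.sqrt_sq h1.le]

/-- Univariate Student's t density with `ν` degrees of freedom, location `μ` and scale `V`. -/
noncomputable def tDensity (ν μ V : ℝ) (z : ℝ) : ℝ :=
  Real.Gamma ((ν + 1) / 2) / (Real.Gamma (ν / 2) * Real.sqrt (ν * π * V)) *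
    (1 + (z - μ) ^ 2 / (ν * V)) ^ (-(ν + 1) / 2)

theorem t_power_integral_bound_dof_free (ν μ V β : ℝ) (hν : 0 < ν) (hV : 0 < V) (hβ : 0 ≤ β) :
    (1 / (1 + β)) * ∫ z : ℝ, tDensity ν μ V z ^ (1 + β) ≤
      1 / ((1 + β) * V ^ (β / 2) * π ^ (β / 2)) := by
  have hπ := Real.pi_pos
  set s : ℝ := (ν + 1) / 2 with hs_def
  have hs : 1/2 < s := by rw [hs_def]; linarith
  have hs0 : 0 < s := by linarith
  set c : ℝ := Real.sqrt (ν * V) with hc_def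
  have hc : 0 < c := Real.sqrt_pos.mpr (by positivity)
  have hc2 : c ^ 2 = ν * V := Real.sq_sqrt (by positivity)
  set C : ℝ := Real.Gamma ((ν + 1) / 2) / (Real.Gamma (ν / 2) * Real.sqrt (ν * π * V))
    with hC_def
  have hG1 : 0 < Real.Gamma ((ν + 1) / 2) := Real.Gamma_pos_of_pos (by linarith)
  have hG2 : 0 < Real.Gamma (ν / 2) := Real.Gamma_pos_of_pos (by linarith)
  have hC : 0 < C := by
    apply div_pos hG1
    apply mul_pos hG2 (Real.sqrt_pos.mpr (by positivity))
  -- rewrite tDensity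
  have htd : ∀ z : ℝ, tDensity ν μ V z = C * (1 + (z - μ) ^ 2 / (ν * V)) ^ (-s) := by
    intro z
    rw [tDensity, hC_def, hs_def, neg_div]
  have hbase : ∀ z : ℝ, (1:ℝ) ≤ 1 + (z - μ) ^ 2 / (ν * V) := by
    intro z
    have : 0 ≤ (z - μ) ^ 2 / (ν * V) := by positivity
    linarith
  -- integrability of the base integrand
  have hint0 : Integrable (fun u : ℝ => (1 + u ^ 2) ^ (-s)) := by
    have h := integrable_rpow_neg_one_add_norm_sq (E := ℝ) (μ := volume)
      (r := ν + 1) (by simp; linarith)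
    have heq : (fun u : ℝ => (1 + u ^ 2) ^ (-s)) =
        (fun x : ℝ => ((1:ℝ) + ‖x‖ ^ 2) ^ (-(ν + 1) / 2)) := by
      funext x
      rw [Real.norm_eq_abs, sq_abs]
      congr 1
      rw [hs_def]; ring
    rw [heq]
    exact h
  have hint1 : Integrable (fun z : ℝ => (1 + (z - μ) ^ 2 / (ν * V)) ^ (-s)) := by
    have h1 : (fun z : ℝ => (1 + (z - μ) ^ 2 / (ν * V)) ^ (-s)) =
        fun z : ℝ => (fun u : ℝ => (1 + u ^ 2) ^ (-s)) (c⁻¹ * (z - μ)) := by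
      funext z
      simp only
      congr 2
      rw [mul_pow, inv_pow, hc2]
      field_simp
    rw [h1]
    exact (hint0.comp_mul_left' (by positivity : c⁻¹ ≠ 0)).comp_sub_right μ
  -- normalization integral
  have hnorm : ∫ z : ℝ, (1 + (z - μ) ^ 2 / (ν * V)) ^ (-s) =
      c * (Real.sqrt π * Real.Gamma (ν / 2) / Real.Gamma ((ν + 1) / 2)) := by
    have h1 : ∫ z : ℝ, (1 + (z - μ) ^ 2 / (ν * V)) ^ (-s) =
        ∫ z : ℝ, (1 + z ^ 2 / (ν * V)) ^ (-s) :=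
      integral_sub_right_eq_self (fun z : ℝ => (1 + z ^ 2 / (ν * V)) ^ (-s)) μ
    have h2 : (fun z : ℝ => (1 + z ^ 2 / (ν * V)) ^ (-s)) =
        fun z : ℝ => (fun u : ℝ => (1 + u ^ 2) ^ (-s)) (c⁻¹ * z) := by
      funext z
      simp only
      congr 2
      rw [mul_pow, inv_pow, hc2]
      field_simp
    rw [h1, h2, MeasureTheory.Measure.integral_comp_inv_mul_left
      (fun u : ℝ => (1 + u ^ 2) ^ (-s)) c, integral_one_add_sq_rpow hs,
      smul_eq_mul, abs_of_pos hc]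
    congr 2
    rw [hs_def]; ring
  -- key: ∫ tDensity = 1
  have hCc : C * (c * (Real.sqrt π * Real.Gamma (ν / 2) / Real.Gamma ((ν + 1) / 2))) = 1 := by
    rw [hC_def, hc_def]
    rw [show ν * π * V = (ν * V) * π by ring, Real.sqrt_mul (by positivity)]
    field_simp
  -- pointwise bound
  have hpt : ∀ z : ℝ, tDensity ν μ V z ^ (1 + β) ≤ C ^ β * tDensity ν μ V z := by
    intro z
    rw [htd z]
    have hb1 : (1:ℝ) ≤ 1 + (z - μ) ^ 2 / (ν * V) := hbase z
    have hb0 : (0:ℝ) ≤ 1 + (z - μ) ^ 2 / (ν * V) := by linarith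
    have e5 : ((1 + (z - μ) ^ 2 / (ν * V)) ^ (-s)) ^ (1 + β)
        = (1 + (z - μ) ^ 2 / (ν * V)) ^ (-s * (1 + β)) := by
      rw [← Real.rpow_mul hb0]
    have e6 : (1 + (z - μ) ^ 2 / (ν * V)) ^ (-s * (1 + β)) ≤
        (1 + (z - μ) ^ 2 / (ν * V)) ^ (-s) :=
      Real.rpow_le_rpow_of_exponent_le hb1 (by nlinarith)
    have e7 : C ^ (1 + β) = C ^ β * C := by
      rw [add_comm, Real.rpow_add hC, Real.rpow_one]
    rw [Real.mul_rpow hC.le (Real.rpow_nonneg hb0 _), e5, e7, mul_assoc]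
    exact mul_le_mul_of_nonneg_left (mul_le_mul_of_nonneg_left e6 hC.le)
      (Real.rpow_nonneg hC.le β)
  -- integral of tDensity equals 1
  have hone : ∫ z : ℝ, tDensity ν μ V z = 1 := by
    simp only [htd]
    rw [integral_const_mul, hnorm]
    exact hCc
  have hInt2 : Integrable (fun z : ℝ => C ^ β * tDensity ν μ V z) := by
    simp only [htd]
    exact (hint1.const_mul C).const_mul _
  have hmono : (∫ z : ℝ, tDensity ν μ V z ^ (1 + β)) ≤ ∫ z : ℝ, C ^ β * tDensity ν μ V z := by
    refine integral_mono_of_nonneg (ae_of_all _ fun z => ?_) hInt2 (ae_of_all _ hpt)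
    apply Real.rpow_nonneg
    rw [htd]
    positivity
  have hval : ∫ z : ℝ, C ^ β * tDensity ν μ V z = C ^ β := by
    rw [integral_const_mul, hone, mul_one]
  -- bound on C
  have hCle : C ≤ (Real.sqrt (π * V))⁻¹ := by
    have h1 : Real.sqrt (ν * π * V) = Real.sqrt ν * Real.sqrt (π * V) := by
      rw [mul_assoc, Real.sqrt_mul hν.le]
    have h2 : 0 < Real.sqrt (π * V) := Real.sqrt_pos.mpr (by positivity)
    have h3 : 0 < Real.sqrt ν := Real.sqrt_pos.mpr hν
    rw [hC_def, h1, div_le_iff₀ (by positivity)]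
    have h4 := gamma_ratio_le hν
    calc Real.Gamma ((ν + 1) / 2) ≤ Real.sqrt ν * Real.Gamma (ν / 2) := h4
      _ = (Real.sqrt (π * V))⁻¹ * (Real.Gamma (ν / 2) * (Real.sqrt ν * Real.sqrt (π * V))) := by
          field_simp
  have hCb : C ^ β ≤ π ^ (-(β / 2)) * V ^ (-(β / 2)) := by
    have h2 : 0 < Real.sqrt (π * V) := Real.sqrt_pos.mpr (by positivity)
    have e1 : (Real.sqrt (π * V))⁻¹ = (π * V) ^ (-(1/2:ℝ)) := by
      rw [Real.rpow_neg (by positivity), Real.sqrt_eq_rpow]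
    calc C ^ β ≤ ((π * V) ^ (-(1/2:ℝ))) ^ β := by
          rw [← e1]; exact Real.rpow_le_rpow hC.le hCle hβ
      _ = (π * V) ^ (-(β / 2)) := by
          rw [← Real.rpow_mul (by positivity)]
          norm_num
          ring_nf
      _ = π ^ (-(β / 2)) * V ^ (-(β / 2)) := Real.mul_rpow hπ.le hV.le
  have h1β : (0:ℝ) < 1 + β := by linarith
  calc (1 / (1 + β)) * ∫ z : ℝ, tDensity ν μ V z ^ (1 + β)
      ≤ (1 / (1 + β)) * C ^ β := by
        exact mul_le_mul_of_nonneg_left (hmono.trans_eq hval) (by positivity)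
    _ ≤ (1 / (1 + β)) * (π ^ (-(β / 2)) * V ^ (-(β / 2))) :=
        mul_le_mul_of_nonneg_left hCb (by positivity)
    _ = 1 / ((1 + β) * V ^ (β / 2) * π ^ (β / 2)) := by
        rw [Real.rpow_neg hπ.le, Real.rpow_neg hV.le]
        have hπr : (0:ℝ) < π ^ (β / 2) := Real.rpow_pos_of_pos hπ _
        have hVr : (0:ℝ) < V ^ (β / 2) := Real.rpow_pos_of_pos hV _
        field_simp
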